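/- Let K: u -> A u + a and F: v -> B v + b be k-flats in R^d, where A, B have orthonormal columns, A^T B = diag(sigma_1, ..., sigma_k) with 0 <= sigma_i <= 1. Suppose x_F = A u_F + a in K and y_K = B v_K + b in F satisfy dist(x_F, y_K) = dist(F, K). Then for any point x = A u + a in K, dist(x, F)^2 = sum_{i=1}^k (1 - sigma_i^2) (u - u_F)_i^2 + dist(F, K)^2. -/
import Mathlib


open Matrix Metric

/-- View a plain vector of `ℝ^d` as a point of Euclidean space. -/
noncomputable def toEuc {d : ℕ} (v : Fin d → ℝ) : EuclideanSpace ℝ (Fin d) :=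
  (WithLp.equiv 2 (Fin d → ℝ)).symm v

lemma dotProduct_self_nonneg' {n : ℕ} (x : Fin n → ℝ) : 0 ≤ x ⬝ᵥ x := by
  apply Finset.sum_nonneg
  intro i _
  exact mul_self_nonneg _

lemma distEuc_sq {d : ℕ} (x y : Fin d → ℝ) :
    dist (toEuc x) (toEuc y) ^ 2 = (x - y) ⬝ᵥ (x - y) := by
  rw [EuclideanSpace.dist_eq, Real.sq_sqrt (by positivity)]
  unfold toEuc
  simp [dotProduct, Real.dist_eq, sq_abs, sq]

lemma mulVec_dot {d k : ℕ} (A : Matrix (Fin d) (Fin k) ℝ) (z : Fin k → ℝ) (y : Fin d → ℝ) :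
    (A *ᵥ z) ⬝ᵥ y = z ⬝ᵥ (Aᵀ *ᵥ y) := by
  rw [dotProduct_comm, dotProduct_mulVec, ← Matrix.mulVec_transpose, dotProduct_comm]

lemma expand_sub {n : ℕ} (p q : Fin n → ℝ) :
    (p - q) ⬝ᵥ (p - q) = p ⬝ᵥ p - 2 * (p ⬝ᵥ q) + q ⬝ᵥ q := by
  rw [sub_dotProduct, dotProduct_sub, dotProduct_sub, dotProduct_comm q p]
  ring

lemma expand_add {n : ℕ} (p q : Fin n → ℝ) :
    (p + q) ⬝ᵥ (p + q) = p ⬝ᵥ p + 2 * (p ⬝ᵥ q) + q ⬝ᵥ q := by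
  rw [add_dotProduct, dotProduct_add, dotProduct_add, dotProduct_comm q p]
  ring

/-- distance formula between a point of the flat `K : u ↦ Au + a`
and the flat `F : v ↦ Bv + b`, where `A, B` have orthonormal columns,
`Aᵀ B = diag σ` with `0 ≤ σ i ≤ 1`, `a ⊥ col A`, `b ⊥ col B`, and
`(x_F, y_K) ∈ K × F` realizes the distance between `F` and `K`. -/
theorem stmt6 {d k : ℕ} (A B : Matrix (Fin d) (Fin k) ℝ)
    (a b : Fin d → ℝ)
    (hA : Aᵀ * A = 1) (hB : Bᵀ * B = 1)
    (σ : Fin k → ℝ) (hσ0 : ∀ i, 0 ≤ σ i) (hσ1 : ∀ i, σ i ≤ 1)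
    (hdiag : Aᵀ * B = Matrix.diagonal σ)
    (ha : Aᵀ *ᵥ a = 0) (hb : Bᵀ *ᵥ b = 0)
    (K F : Set (EuclideanSpace ℝ (Fin d)))
    (hK : K = {x | ∃ u : Fin k → ℝ, x = toEuc (A *ᵥ u + a)})
    (hF : F = {y | ∃ v : Fin k → ℝ, y = toEuc (B *ᵥ v + b)})
    (uF vK : Fin k → ℝ)
    (hclosest : ∀ x ∈ K, ∀ y ∈ F,
      dist (toEuc (A *ᵥ uF + a)) (toEuc (B *ᵥ vK + b)) ≤ dist x y) :
    ∀ u : Fin k → ℝ,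
      (infDist (toEuc (A *ᵥ u + a)) F) ^ 2 =
        (∑ i, (1 - σ i ^ 2) * (u i - uF i) ^ 2) +
          (dist (toEuc (A *ᵥ uF + a)) (toEuc (B *ᵥ vK + b))) ^ 2 := by
  intro u
  -- notation
  set c : Fin k → ℝ := fun i => 1 - σ i ^ 2 with hc
  set w : Fin k → ℝ := fun i => (Aᵀ *ᵥ b) i + σ i * (Bᵀ *ᵥ a) i with hw
  set vst : (Fin k → ℝ) → (Fin k → ℝ) := fun u' => σ * u' + Bᵀ *ᵥ a with hvst
  set g : (Fin k → ℝ) → ℝ :=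
    fun u' => (A *ᵥ u' + (a - b)) ⬝ᵥ (A *ᵥ u' + (a - b)) - (vst u') ⬝ᵥ (vst u') with hg
  set D : ℝ := dist (toEuc (A *ᵥ uF + a)) (toEuc (B *ᵥ vK + b)) with hD
  -- basic matrix facts
  have hBA : ∀ u' : Fin k → ℝ, Bᵀ *ᵥ (A *ᵥ u') = σ * u' := by
    intro u'
    rw [mulVec_mulVec]
    have : Bᵀ * A = Matrix.diagonal σ := by
      have := congrArg Matrix.transpose hdiag
      rwa [Matrix.transpose_mul, Matrix.transpose_transpose, Matrix.diagonal_transpose] at this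
    rw [this]
    ext i
    simp [Matrix.mulVec_diagonal]
  have hAAdot : ∀ z z' : Fin k → ℝ, (A *ᵥ z) ⬝ᵥ (A *ᵥ z') = z ⬝ᵥ z' := by
    intro z z'
    rw [mulVec_dot, mulVec_mulVec, hA, one_mulVec]
  have hBBdot : ∀ z z' : Fin k → ℝ, (B *ᵥ z) ⬝ᵥ (B *ᵥ z') = z ⬝ᵥ z' := by
    intro z z'
    rw [mulVec_dot, mulVec_mulVec, hB, one_mulVec]
  -- the key identity
  have key : ∀ (u' v : Fin k → ℝ),
      dist (toEuc (A *ᵥ u' + a)) (toEuc (B *ᵥ v + b)) ^ 2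
        = g u' + (v - vst u') ⬝ᵥ (v - vst u') := by
    intro u' v
    rw [distEuc_sq]
    have hvec : (A *ᵥ u' + a) - (B *ᵥ v + b) = (A *ᵥ u' + (a - b)) - B *ᵥ v := by
      abel
    rw [hvec, expand_sub, expand_sub]
    have hBp : Bᵀ *ᵥ (A *ᵥ u' + (a - b)) = vst u' := by
      rw [Matrix.mulVec_add, Matrix.mulVec_sub, hBA, hb, hvst]
      simp
    have hpv : (A *ᵥ u' + (a - b)) ⬝ᵥ (B *ᵥ v) = (vst u') ⬝ᵥ v := by
      rw [dotProduct_comm, mulVec_dot, hBp, dotProduct_comm]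
    rw [hpv, hBBdot, hg]
    have : v ⬝ᵥ vst u' = vst u' ⬝ᵥ v := dotProduct_comm _ _
    rw [this]
    ring
  -- separable form of g
  have gsep : ∀ u' : Fin k → ℝ,
      g u' = (∑ i, (c i * u' i ^ 2 - 2 * (w i * u' i)))
        + ((a - b) ⬝ᵥ (a - b) - (Bᵀ *ᵥ a) ⬝ᵥ (Bᵀ *ᵥ a)) := by
    intro u'
    rw [hg]
    simp only
    rw [expand_add, expand_add, hAAdot]
    have h1 : (A *ᵥ u') ⬝ᵥ (a - b) = -(u' ⬝ᵥ (Aᵀ *ᵥ b)) := by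
      rw [mulVec_dot, Matrix.mulVec_sub, ha, zero_sub, dotProduct_neg]
    rw [h1]
    simp only [dotProduct, Pi.mul_apply, Pi.sub_apply]
    have hsum : ∑ i, (c i * u' i ^ 2 - 2 * (w i * u' i))
        = ∑ i, u' i * u' i - 2 * ∑ i, u' i * (Aᵀ *ᵥ b) i
          - (∑ i, σ i * u' i * (σ i * u' i) + 2 * ∑ i, σ i * u' i * (Bᵀ *ᵥ a) i) := by
      rw [Finset.mul_sum, Finset.mul_sum, ← Finset.sum_sub_distrib,
        ← Finset.sum_add_distrib, ← Finset.sum_sub_distrib]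
      apply Finset.sum_congr rfl
      intro i _
      rw [hc, hw]
      ring
    rw [hsum]
    ring
  -- h, the separable quadratic
  set h : (Fin k → ℝ) → ℝ := fun u' => ∑ i, (c i * u' i ^ 2 - 2 * (w i * u' i)) with hh
  have gdiff : ∀ u₁ u₂ : Fin k → ℝ, g u₁ - g u₂ = h u₁ - h u₂ := by
    intro u₁ u₂
    rw [gsep u₁, gsep u₂, hh]
    ring
  -- membership facts
  have memK : ∀ u' : Fin k → ℝ, toEuc (A *ᵥ u' + a) ∈ K := by
    intro u'; rw [hK]; exact ⟨u', rfl⟩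
  have memF : ∀ v : Fin k → ℝ, toEuc (B *ᵥ v + b) ∈ F := by
    intro v; rw [hF]; exact ⟨v, rfl⟩
  -- D² ≤ g u' for all u'
  have hDle : ∀ u' : Fin k → ℝ, D ^ 2 ≤ g u' := by
    intro u'
    have h1 := hclosest _ (memK u') _ (memF (vst u'))
    have h2 : dist (toEuc (A *ᵥ u' + a)) (toEuc (B *ᵥ vst u' + b)) ^ 2 = g u' := by
      rw [key u' (vst u')]
      simp
    calc D ^ 2 ≤ dist (toEuc (A *ᵥ u' + a)) (toEuc (B *ᵥ vst u' + b)) ^ 2 := by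
          apply pow_le_pow_left₀ dist_nonneg h1
      _ = g u' := h2
  -- D² = g uF
  have hDF : D ^ 2 = g uF := by
    have h1 : D ^ 2 = g uF + (vK - vst uF) ⬝ᵥ (vK - vst uF) := key uF vK
    have h2 := hDle uF
    have h3 := dotProduct_self_nonneg' (vK - vst uF)
    linarith
  -- minimality of h at uF
  have hmin : ∀ u' : Fin k → ℝ, h uF ≤ h u' := by
    intro u'
    have := hDle u'
    have h2 := gdiff u' uF
    linarith
  -- coordinatewise minimality
  have hcoord : ∀ (i : Fin k) (t : ℝ),
      c i * (uF i) ^ 2 - 2 * (w i * uF i) ≤ c i * t ^ 2 - 2 * (w i * t) := by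
    intro i t
    have h1 := hmin (Function.update uF i t)
    rw [hh] at h1
    have h2 : ∑ j, (c j * (Function.update uF i t j) ^ 2 - 2 * (w j * Function.update uF i t j))
        - ∑ j, (c j * uF j ^ 2 - 2 * (w j * uF j))
        = (c i * t ^ 2 - 2 * (w i * t)) - (c i * uF i ^ 2 - 2 * (w i * uF i)) := by
      rw [← Finset.sum_sub_distrib]
      rw [Finset.sum_eq_single i]
      · rw [Function.update_self]
      · intro j _ hj
        rw [Function.update_of_ne hj]
        ring
      · intro habs
        exact absurd (Finset.mem_univ i) habs
    linarith
  -- the gradient vanishes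
  have hr : ∀ i : Fin k, c i * uF i - w i = 0 := by
    intro i
    set r : ℝ := c i * uF i - w i with hrdef
    have h1 := hcoord i (uF i - r)
    have hcle : c i ≤ 1 := by
      rw [hc]
      simp only
      nlinarith [sq_nonneg (σ i)]
    nlinarith [sq_nonneg r]
  -- difference formula
  have hhd : h u - h uF = ∑ i, c i * (u i - uF i) ^ 2 := by
    rw [hh]
    simp only
    rw [← Finset.sum_sub_distrib]
    apply Finset.sum_congr rfl
    intro i _
    have : w i = c i * uF i := by have := hr i; linarith
    rw [this]
    ring
  -- g u ≥ 0
  have hg0 : 0 ≤ g u := le_trans (by positivity) (hDle u)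
  -- nonemptiness of F
  have hFne : F.Nonempty := ⟨_, memF 0⟩
  -- infDist = sqrt (g u)
  have hinf : infDist (toEuc (A *ᵥ u + a)) F = Real.sqrt (g u) := by
    apply le_antisymm
    · have h1 : dist (toEuc (A *ᵥ u + a)) (toEuc (B *ᵥ vst u + b)) = Real.sqrt (g u) := by
        have h2 : dist (toEuc (A *ᵥ u + a)) (toEuc (B *ᵥ vst u + b)) ^ 2 = g u := by
          rw [key u (vst u)]; simp
        rw [← h2, Real.sqrt_sq dist_nonneg]
      rw [← h1]
      exact infDist_le_dist_of_mem (memF (vst u))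
    · by_contra hlt
      push_neg at hlt
      obtain ⟨y, hy, hylt⟩ := (infDist_lt_iff hFne).1 hlt
      obtain ⟨v, rfl⟩ := by rw [hF] at hy; exact hy
      have h2 : g u ≤ dist (toEuc (A *ᵥ u + a)) (toEuc (B *ᵥ v + b)) ^ 2 := by
        rw [key u v]
        have := dotProduct_self_nonneg' (v - vst u)
        linarith
      have h3 : Real.sqrt (g u) ≤ dist (toEuc (A *ᵥ u + a)) (toEuc (B *ᵥ v + b)) := by
        rw [← Real.sqrt_sq (dist_nonneg (x := toEuc (A *ᵥ u + a)) (y := toEuc (B *ᵥ v + b)))]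
        exact Real.sqrt_le_sqrt h2
      linarith
  rw [hinf, Real.sq_sqrt hg0]
  have : g u = (g u - g uF) + g uF := by ring
  rw [this, gdiff u uF, hhd, hDF]
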